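/- Let v_k ∈ ℤ^n (for k ∈ {1,…,n}) be the vectors v_k := y·e_{k−1} − (x+y)·e_k + x·e_{k+1}, where e_1,…,e_n is the standard basis of ℤ^n and e_0 := 0, e_{n+1} := 0. The group homomorphism ℤ^n → ℤ/Fℤ sending e_k to h_k mod F is surjective, and its kernel is exactly the subgroup ⟨v_1,…,v_n⟩; hence it induces a group isomorphism ℤ^n / ⟨v_1,…,v_n⟩ ≅ ℤ/Fℤ. -/

import Mathlib

/-- `F = Σ_{k=0}^n x^(n−k)·y^k`. -/
def Fval (n x y : ℕ) : ℕ := ∑ k ∈ Finset.range (n + 1), x ^ (n - k) * y ^ k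

/-- Harmonic values: `h_0 = 0` and `h_k = Σ_{i=0}^{k−1} x^(n−i)·y^i`. -/
def hval (n x y k : ℕ) : ℕ := ∑ i ∈ Finset.range k, x ^ (n - i) * y ^ i

/-- The vector `v_k = y·e_{k−1} − (x+y)·e_k + x·e_{k+1}` in `ℤ^n`, where
`e_1,…,e_n` is the standard basis (`e_0 = e_{n+1} = 0`); here coordinates and
indices are 0-based, so `k : Fin n` stands for the vertex `u_{k+1}`. -/
def vvec (n x y : ℕ) (k : Fin n) : Fin n → ℤ := fun i =>
  (if (i : ℕ) + 1 = (k : ℕ) then (y : ℤ) else 0)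
    - (if i = k then ((x : ℤ) + (y : ℤ)) else 0)
    + (if (i : ℕ) = (k : ℕ) + 1 then (x : ℤ) else 0)


namespace HarmonicKernelAux

open Finset

lemma sum_if_eq {M : Type*} [AddCommMonoid M] {n : ℕ} (j : ℕ) (g : Fin n → M) :
    (∑ k : Fin n, if (k : ℕ) = j then g k else 0) = if h : j < n then g ⟨j, h⟩ else 0 := by
  split_ifs with h
  · rw [Finset.sum_eq_single (⟨j, h⟩ : Fin n)]
    · simp
    · intro k _ hk
      rw [if_neg]
      intro hkj; exact hk (Fin.ext hkj)
    · simp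
  · refine Finset.sum_eq_zero fun k _ => ?_
    rw [if_neg]
    intro hkj; exact h (hkj ▸ k.isLt)

lemma hval_succ (n x y k : ℕ) : hval n x y (k+1) = hval n x y k + x ^ (n - k) * y ^ k :=
  Finset.sum_range_succ _ _

lemma hval_key (n x y : ℕ) {k : ℕ} (hk : k < n) :
    y * hval n x y k + x * hval n x y (k + 2) = (x + y) * hval n x y (k + 1) := by
  rw [hval_succ, hval_succ]
  have h1 : n - k = (n - (k+1)) + 1 := by omega
  rw [h1, pow_succ]
  ring

lemma hval_top (n x y : ℕ) : hval n x y (n + 1) = Fval n x y := rfl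

lemma Fval_reflect (n x y : ℕ) :
    (Fval n x y : ℤ) = ∑ m ∈ Finset.range (n+1), (x:ℤ) ^ m * (y:ℤ) ^ (n - m) := by
  rw [Fval]
  push_cast
  rw [← Finset.sum_range_reflect (fun m => (x:ℤ) ^ m * (y:ℤ) ^ (n - m)) (n+1)]
  refine Finset.sum_congr rfl fun k hk => ?_
  rw [Finset.mem_range] at hk
  rw [show n + 1 - 1 - k = n - k from by omega, show n - (n - k) = k from by omega]

lemma swapLemma (M : ℕ) (f : ℕ → ℕ → ℤ) :
    ∑ i ∈ Finset.range M, ∑ j ∈ Finset.range i, f i j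
      = ∑ j ∈ Finset.range M, ∑ i ∈ Finset.Ico (j+1) M, f i j := by
  induction M with
  | zero => simp
  | succ M ih =>
    rw [Finset.sum_range_succ, ih,
      Finset.sum_range_succ (fun j => ∑ i ∈ Finset.Ico (j+1) (M+1), f i j)]
    simp only [Finset.Ico_self, Finset.sum_empty, add_zero]
    rw [← Finset.sum_add_distrib]
    refine Finset.sum_congr rfl fun j hj => ?_
    rw [Finset.mem_range] at hj
    rw [Finset.sum_Ico_succ_top (by omega)]

lemma rowEval (n x y : ℕ) (T : ℕ → ℤ) (i : Fin n) :
    (∑ k : Fin n, T (k:ℕ) • vvec n x y k) i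
      = (if (i:ℕ)+1 < n then (y:ℤ) * T ((i:ℕ)+1) else 0)
        - ((x:ℤ)+(y:ℤ)) * T (i:ℕ)
        + (if 1 ≤ (i:ℕ) then (x:ℤ) * T ((i:ℕ)-1) else 0) := by
  rw [Finset.sum_apply]
  simp only [Pi.smul_apply, smul_eq_mul, vvec]
  simp only [mul_sub, mul_add, Finset.sum_sub_distrib, Finset.sum_add_distrib]
  have S1 : (∑ k : Fin n, T (k:ℕ) * (if (i:ℕ)+1 = (k:ℕ) then (y:ℤ) else 0))
      = if (i:ℕ)+1 < n then (y:ℤ) * T ((i:ℕ)+1) else 0 := by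
    have : ∀ k : Fin n, T (k:ℕ) * (if (i:ℕ)+1 = (k:ℕ) then (y:ℤ) else 0)
        = if (k:ℕ) = (i:ℕ)+1 then T (k:ℕ) * (y:ℤ) else 0 := by
      intro k
      by_cases h : (k:ℕ) = (i:ℕ)+1
      · rw [if_pos h, if_pos h.symm]
      · rw [if_neg h, if_neg (fun hh => h hh.symm), mul_zero]
    rw [Finset.sum_congr rfl fun k _ => this k, sum_if_eq]
    split_ifs with h
    · exact mul_comm _ _
    · rfl
  have S2 : (∑ k : Fin n, T (k:ℕ) * (if i = k then (x:ℤ)+(y:ℤ) else 0))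
      = ((x:ℤ)+(y:ℤ)) * T (i:ℕ) := by
    have : ∀ k : Fin n, T (k:ℕ) * (if i = k then (x:ℤ)+(y:ℤ) else 0)
        = if (k:ℕ) = (i:ℕ) then T (k:ℕ) * ((x:ℤ)+(y:ℤ)) else 0 := by
      intro k
      by_cases h : (k:ℕ) = (i:ℕ)
      · rw [if_pos h, if_pos (Fin.ext h.symm)]
      · rw [if_neg h, if_neg (fun hh => h (congrArg Fin.val hh.symm)), mul_zero]
    rw [Finset.sum_congr rfl fun k _ => this k, sum_if_eq]
    rw [dif_pos i.isLt]
    simp [mul_comm]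
  have S3 : (∑ k : Fin n, T (k:ℕ) * (if (i:ℕ) = (k:ℕ)+1 then (x:ℤ) else 0))
      = if 1 ≤ (i:ℕ) then (x:ℤ) * T ((i:ℕ)-1) else 0 := by
    rcases Nat.eq_zero_or_pos (i:ℕ) with h0 | h0
    · rw [if_neg (by omega)]
      refine Finset.sum_eq_zero fun k _ => ?_
      rw [if_neg (by omega), mul_zero]
    · obtain ⟨m, hm⟩ : ∃ m, (i:ℕ) = m + 1 := ⟨(i:ℕ)-1, by omega⟩
      have : ∀ k : Fin n, T (k:ℕ) * (if (i:ℕ) = (k:ℕ)+1 then (x:ℤ) else 0)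
          = if (k:ℕ) = m then T (k:ℕ) * (x:ℤ) else 0 := by
        intro k
        by_cases h : (k:ℕ) = m
        · rw [if_pos h, if_pos (by omega)]
        · rw [if_neg h, if_neg (by omega), mul_zero]
      rw [Finset.sum_congr rfl fun k _ => this k, sum_if_eq, dif_pos (show m < n by omega)]
      rw [if_pos (show 1 ≤ (i:ℕ) from h0), show (i:ℕ)-1 = m from by omega]
      exact mul_comm _ _
  rw [S1, S2, S3]

lemma phi_vvec (n x y : ℕ) (k : Fin n) :
    ∑ i : Fin n, ((vvec n x y k i : ℤ) : ZMod (Fval n x y))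
        * ((hval n x y ((i:ℕ)+1) : ℕ) : ZMod (Fval n x y)) = 0 := by
  set N := Fval n x y with hN
  set h : ℕ → ZMod N := fun t => ((hval n x y t : ℕ) : ZMod N) with hh
  simp only [vvec, Int.cast_sub, Int.cast_add, sub_mul, add_mul,
    Finset.sum_sub_distrib, Finset.sum_add_distrib]
  have cast_ite : ∀ (P : Prop) [Decidable P] (a : ℤ),
      ((if P then a else 0 : ℤ) : ZMod N) = if P then (a : ZMod N) else 0 := by
    intro P _ a; split_ifs <;> simp
  simp only [cast_ite, ite_mul, zero_mul]
  have S2 : (∑ i : Fin n, if i = k then (((x:ℤ)+(y:ℤ) : ℤ) : ZMod N) * h ((i:ℕ)+1) else 0)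
      = (((x:ℕ):ZMod N) + ((y:ℕ):ZMod N)) * h ((k:ℕ)+1) := by
    have : ∀ i : Fin n, (if i = k then (((x:ℤ)+(y:ℤ) : ℤ) : ZMod N) * h ((i:ℕ)+1) else 0)
        = if (i:ℕ) = (k:ℕ) then (((x:ℤ)+(y:ℤ) : ℤ) : ZMod N) * h ((i:ℕ)+1) else 0 := by
      intro i
      by_cases hik : i = k
      · rw [if_pos hik, if_pos (congrArg Fin.val hik)]
      · rw [if_neg hik, if_neg (fun hh2 => hik (Fin.ext hh2))]
    rw [Finset.sum_congr rfl fun i _ => this i, sum_if_eq, dif_pos k.isLt]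
    push_cast
    simp
  have S3 : (∑ i : Fin n, if (i:ℕ) = (k:ℕ)+1 then (((x:ℕ):ℤ) : ZMod N) * h ((i:ℕ)+1) else 0)
      = if (k:ℕ)+1 < n then ((x:ℕ):ZMod N) * h ((k:ℕ)+2) else 0 := by
    rw [sum_if_eq]
    split_ifs with h1
    · push_cast; ring_nf
    · rfl
  have S1 : (∑ i : Fin n, if (i:ℕ)+1 = (k:ℕ) then (((y:ℕ):ℤ) : ZMod N) * h ((i:ℕ)+1) else 0)
      = ((y:ℕ):ZMod N) * h (k:ℕ) := by
    rcases Nat.eq_zero_or_pos (k:ℕ) with h0 | h0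
    · rw [h0]
      rw [Finset.sum_eq_zero fun i _ => by rw [if_neg (by omega)]]
      have : h 0 = 0 := by simp [hh, hval]
      rw [this, mul_zero]
    · obtain ⟨m, hm⟩ : ∃ m, (k:ℕ) = m + 1 := ⟨(k:ℕ)-1, by omega⟩
      have : ∀ i : Fin n, (if (i:ℕ)+1 = (k:ℕ) then (((y:ℕ):ℤ) : ZMod N) * h ((i:ℕ)+1) else 0)
          = if (i:ℕ) = m then (((y:ℕ):ℤ) : ZMod N) * h ((i:ℕ)+1) else 0 := by
        intro i
        by_cases hi : (i:ℕ) = m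
        · rw [if_pos (by omega), if_pos hi]
        · rw [if_neg (by omega), if_neg hi]
      rw [Finset.sum_congr rfl fun i _ => this i, sum_if_eq, dif_pos (show m < n by omega)]
      push_cast
      rw [hm]
  rw [S1, S2, S3]
  have cast_key : ∀ {j : ℕ}, j < n →
      ((y:ℕ):ZMod N) * h j + ((x:ℕ):ZMod N) * h (j+2)
        = (((x:ℕ):ZMod N) + ((y:ℕ):ZMod N)) * h (j+1) := by
    intro j hj
    have := congrArg (fun t : ℕ => (t : ZMod N)) (hval_key n x y hj)
    push_cast at this
    simpa [hh] using this
  by_cases h1 : (k:ℕ)+1 < n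
  · rw [if_pos h1]
    have := cast_key (show (k:ℕ) < n from by omega)
    linear_combination this
  · rw [if_neg h1]
    have hk2 : (k:ℕ) + 2 = n + 1 := by have := k.isLt; omega
    have := cast_key (show (k:ℕ) < n from k.isLt)
    rw [hk2] at this
    have hz : h (n+1) = 0 := by
      rw [hh]
      simp only [hval_top]
      exact_mod_cast ZMod.natCast_self N
    rw [hz, mul_zero] at this
    linear_combination this

lemma FE (n x y : ℕ) (hn : 1 ≤ n) :
    ∑ k : Fin n, (-(∑ m ∈ Finset.range ((k:ℕ)+1), (x:ℤ)^m * (y:ℤ)^(n-1-m))) • vvec n x y k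
      = (Fval n x y : ℤ) • Pi.single (⟨n-1, by omega⟩ : Fin n) (1:ℤ) := by
  set α : ℕ → ℤ := fun j => ∑ m ∈ Finset.range (j+1), (x:ℤ)^m * (y:ℤ)^(n-1-m) with hα
  funext i
  have hr := rowEval n x y (fun j => -(α j)) i
  rw [show (∑ k : Fin n, (-(∑ m ∈ Finset.range ((k:ℕ)+1), (x:ℤ)^m * (y:ℤ)^(n-1-m))) • vvec n x y k)
      = ∑ k : Fin n, (-(α (k:ℕ))) • vvec n x y k from rfl, hr]
  rw [Pi.smul_apply, Pi.single_apply, smul_eq_mul]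
  have hαsucc : ∀ j, α (j+1) = α j + (x:ℤ)^(j+1) * (y:ℤ)^(n-1-(j+1)) := fun j =>
    Finset.sum_range_succ _ _
  by_cases h1 : (i:ℕ)+1 < n
  · have hne : ¬(i = (⟨n-1, by omega⟩ : Fin n)) := by
      intro hh
      have := congrArg Fin.val hh
      simp at this; omega
    rw [if_pos h1, if_neg hne, mul_zero]
    by_cases h2 : 1 ≤ (i:ℕ)
    · rw [if_pos h2]
      set m := (i:ℕ) with hm
      have e1 := hαsucc m
      have e2 : α m = α (m-1) + (x:ℤ)^m * (y:ℤ)^(n-1-m) := by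
        conv_lhs => rw [show m = (m-1)+1 from by omega]
        rw [hαsucc, show (m-1)+1 = m from by omega]
      rw [e1, e2, show n-1-(m+1) = n-2-m from by omega, show n-1-m = (n-2-m)+1 from by omega,
        pow_succ]
      ring
    · have hi0 : (i:ℕ) = 0 := by omega
      rw [if_neg h2, hi0]
      have e1 := hαsucc 0
      have e0 : α 0 = (y:ℤ)^(n-1) := by simp [hα]
      rw [e1, e0, show n-1-(0+1) = n-2 from by omega, show n-1 = (n-2)+1 from by omega, pow_succ]
      ring
  · have hieq : (i:ℕ) = n-1 := by have := i.isLt; omega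
    have heq : i = (⟨n-1, by omega⟩ : Fin n) := Fin.ext (by simpa using hieq)
    rw [if_neg h1, if_pos heq, mul_one, hieq]
    by_cases h2 : 1 ≤ (i:ℕ)
    · rw [if_pos (show 1 ≤ n-1 from by omega)]
      have hys : (y:ℤ) * α (n-1) = ∑ t ∈ Finset.range n, (x:ℤ)^t * (y:ℤ)^(n-t) := by
        rw [hα, Finset.mul_sum, show n-1+1 = n from by omega]
        refine Finset.sum_congr rfl fun t ht => ?_
        rw [Finset.mem_range] at ht
        rw [show n-t = (n-1-t)+1 from by omega, pow_succ]
        ring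
      have e2 : α (n-1) = α (n-1-1) + (x:ℤ)^(n-1) * 1 := by
        conv_lhs => rw [show n-1 = (n-1-1)+1 from by omega]
        rw [hαsucc, show (n-1-1)+1 = n-1 from by omega, show n-1-(n-1) = 0 from by omega, pow_zero]
      have hNr : (Fval n x y : ℤ) = (∑ t ∈ Finset.range n, (x:ℤ)^t * (y:ℤ)^(n-t))
          + (x:ℤ)^(n-1) * (x:ℤ) := by
        rw [Fval_reflect, Finset.sum_range_succ, Nat.sub_self, pow_zero, mul_one]
        rw [show (x:ℤ)^n = (x:ℤ)^(n-1) * (x:ℤ) from by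
          rw [← pow_succ, show n-1+1 = n from by omega]]
      linear_combination hys + (x:ℤ) * e2 - hNr
    · have hn1 : n = 1 := by omega
      subst hn1
      rw [if_neg (by norm_num)]
      have e0 : α 0 = 1 := by simp [hα]
      rw [show (1:ℕ)-1 = 0 from rfl, e0, Fval_reflect]
      simp [Finset.sum_range_succ]
      ring

end HarmonicKernelAux

open Finset HarmonicKernelAux in
/-- The group homomorphism `ℤ^n → ℤ/Fℤ` sending `e_k` to
`h_k mod F` is surjective, its kernel is exactly `⟨v_1,…,v_n⟩`, and hence it
induces a group isomorphism `ℤ^n / ⟨v_1,…,v_n⟩ ≅ ℤ/Fℤ`. -/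
theorem harmonic_hom_surjective_kernel
    (n x y : ℕ) (hn : 1 ≤ n) (hx : 0 < x) (hxy : x < y) (hcop : Nat.Coprime x y) :
    ∃ φ : (Fin n → ℤ) →+ ZMod (Fval n x y),
      (∀ k : Fin n, φ (Pi.single k 1) = (hval n x y ((k : ℕ) + 1) : ZMod (Fval n x y))) ∧
      Function.Surjective φ ∧
      (∀ c : Fin n → ℤ, φ c = 0 ↔ c ∈ AddSubgroup.closure (Set.range (vvec n x y))) ∧
      Nonempty (((Fin n → ℤ) ⧸ AddSubgroup.closure (Set.range (vvec n x y)))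
        ≃+ ZMod (Fval n x y)) := by
  classical
  have hy : 0 < y := lt_trans hx hxy
  set N := Fval n x y with hNdef
  have hNpos : 0 < N := by
    rw [hNdef, Fval]
    refine Finset.sum_pos (fun k _ => ?_) ⟨0, by simp⟩
    positivity
  haveI : NeZero N := ⟨hNpos.ne'⟩
  have hXY : IsCoprime (x:ℤ) (y:ℤ) := Nat.isCoprime_iff_coprime.mpr hcop
  have hNdecX : (N:ℤ) = (x:ℤ) * (∑ k ∈ Finset.range n, (x:ℤ)^(n-1-k) * (y:ℤ)^k) + (y:ℤ)^n := by
    rw [hNdef, Fval]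
    push_cast
    rw [Finset.sum_range_succ, Nat.sub_self, pow_zero, one_mul, Finset.mul_sum]
    congr 1
    refine Finset.sum_congr rfl fun k hk => ?_
    rw [Finset.mem_range] at hk
    rw [show n - k = (n-1-k)+1 from by omega, pow_succ]
    ring
  have hNdecY : (N:ℤ) = (y:ℤ) * (∑ k ∈ Finset.range n, (x:ℤ)^(n-1-k) * (y:ℤ)^k) + (x:ℤ)^n := by
    rw [hNdef, Fval]
    push_cast
    rw [Finset.sum_range_succ']
    rw [Nat.sub_zero, pow_zero, mul_one, Finset.mul_sum]
    congr 1
    refine Finset.sum_congr rfl fun k hk => ?_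
    rw [Finset.mem_range] at hk
    rw [show n - (k+1) = n-1-k from by omega, show (y:ℤ)^(k+1) = (y:ℤ)^k * (y:ℤ) from pow_succ _ _]
    ring
  have hcop_xN : IsCoprime ((x:ℤ)^n) (N:ℤ) := by
    have h1 : IsCoprime (x:ℤ)
        ((y:ℤ)^n + (x:ℤ) * (∑ k ∈ Finset.range n, (x:ℤ)^(n-1-k) * (y:ℤ)^k)) :=
      (hXY.pow_right).add_mul_left_right _
    have h2 : IsCoprime (x:ℤ) (N:ℤ) := by
      rw [hNdecX, add_comm]; exact h1
    exact h2.pow_left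
  have hcop_yN : IsCoprime ((y:ℤ)) (N:ℤ) := by
    have h1 : IsCoprime (y:ℤ)
        ((x:ℤ)^n + (y:ℤ) * (∑ k ∈ Finset.range n, (x:ℤ)^(n-1-k) * (y:ℤ)^k)) :=
      (hXY.symm.pow_right).add_mul_left_right _
    rw [hNdecY, add_comm]; exact h1
  have hcop_nat : Nat.Coprime (x^n) N := by
    rw [← Nat.isCoprime_iff_coprime]
    push_cast
    exact hcop_xN
  -- the homomorphism
  set f : (Fin n → ℤ) → ZMod N := fun c =>
    ∑ k : Fin n, ((c k : ℤ) : ZMod N) * ((hval n x y ((k:ℕ)+1) : ℕ) : ZMod N) with hfdef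
  have hf : ∀ a b, f (a + b) = f a + f b := by
    intro a b
    simp only [hfdef, Pi.add_apply, Int.cast_add, add_mul, Finset.sum_add_distrib]
  have hone : ∀ k : Fin n, f (Pi.single k 1) = ((hval n x y ((k:ℕ)+1) : ℕ) : ZMod N) := by
    intro k
    rw [hfdef]
    simp only
    rw [Finset.sum_eq_single k]
    · simp
    · intro j _ hj
      rw [Pi.single_eq_of_ne hj]
      simp
    · simp
  have hsurj : Function.Surjective f := by
    intro z
    set u : (ZMod N)ˣ := ZMod.unitOfCoprime (x^n) hcop_nat with hudef
    obtain ⟨m, hm⟩ := ZMod.intCast_surjective (z * ((u⁻¹ : (ZMod N)ˣ) : ZMod N))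
    refine ⟨fun j => if j = (⟨0, hn⟩ : Fin n) then m else 0, ?_⟩
    rw [hfdef]
    simp only
    rw [Finset.sum_eq_single (⟨0, hn⟩ : Fin n)]
    · rw [if_pos rfl]
      have hv1 : hval n x y ((((⟨0, hn⟩ : Fin n)):ℕ)+1) = x^n := by
        simp [hval]
      rw [hv1, hm]
      have hu : ((x^n : ℕ) : ZMod N) = (u : ZMod N) := (ZMod.coe_unitOfCoprime _ _).symm
      rw [hu]
      exact Units.inv_mul_cancel_right z u
    · intro j _ hj
      rw [if_neg hj, Int.cast_zero, zero_mul]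
    · simp
  have hker_fwd : ∀ k : Fin n, f (vvec n x y k) = 0 := by
    intro k
    rw [hfdef]
    exact phi_vvec n x y k
  -- the hard direction
  have hker2 : ∀ c : Fin n → ℤ, f c = 0 →
      c ∈ AddSubgroup.closure (Set.range (vvec n x y)) := by
    intro c hc
    obtain ⟨c', hc'def⟩ : ∃ c' : ℕ → ℤ, ∀ j, c' j = if h : j < n then c ⟨j, h⟩ else 0 :=
      ⟨_, fun j => rfl⟩
    have hc'eq : ∀ i : Fin n, c' (i:ℕ) = c i := by
      intro i
      rw [hc'def, dif_pos i.isLt]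
    have hdvd : (N:ℤ) ∣ ∑ j ∈ Finset.range n, c' j * ((hval n x y (j+1) : ℕ) : ℤ) := by
      refine (ZMod.intCast_zmod_eq_zero_iff_dvd _ N).mp ?_
      push_cast
      rw [← Fin.sum_univ_eq_sum_range
        (fun j => ((c' j : ℤ) : ZMod N) * ((hval n x y (j+1) : ℕ) : ZMod N)) n]
      rw [Finset.sum_congr rfl (fun i _ => by rw [hc'eq i])]
      rw [hfdef] at hc
      exact hc
    obtain ⟨A, hAdef⟩ : ∃ A : ℕ → ℤ,
        ∀ i, A i = ∑ j ∈ Finset.range i, (x:ℤ)^(i-1-j) * (y:ℤ)^j * c' j := ⟨_, fun i => rfl⟩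
    have hA : ∀ i, A (i+1) = (x:ℤ) * A i + (y:ℤ)^i * c' i := by
      intro i
      rw [hAdef (i+1), hAdef i, Finset.sum_range_succ,
        show (i+1)-1-i = 0 from by omega, pow_zero, one_mul, Finset.mul_sum]
      congr 1
      refine Finset.sum_congr rfl fun j hj => ?_
      rw [Finset.mem_range] at hj
      rw [show (i+1)-1-j = (i-1-j)+1 from by omega, pow_succ]
      ring
    obtain ⟨a, b, hab⟩ := (hXY.pow : IsCoprime ((x:ℤ)^n) ((y:ℤ)^n))
    set s0 : ℤ := -(a * A n) with hs0def
    have hsn : (y:ℤ)^n ∣ (x:ℤ)^n * s0 + A n := by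
      refine ⟨b * A n, ?_⟩
      rw [hs0def]
      linear_combination (-(A n)) * hab
    have hstep : ∀ i : ℕ, ((y:ℤ)^(i+1) ∣ (x:ℤ)^(i+1) * s0 + A (i+1)) →
        ((y:ℤ)^i ∣ (x:ℤ)^i * s0 + A i) := by
      intro i hdd
      have h2 : (x:ℤ)^(i+1) * s0 + A (i+1)
          = (x:ℤ) * ((x:ℤ)^i * s0 + A i) + (y:ℤ)^i * c' i := by
        rw [hA i]; ring
      have h3 : (y:ℤ)^i ∣ (x:ℤ) * ((x:ℤ)^i * s0 + A i) := by
        have h4 : (y:ℤ)^i ∣ (x:ℤ)^(i+1) * s0 + A (i+1) :=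
          dvd_trans (pow_dvd_pow _ (Nat.le_succ i)) hdd
        rw [h2] at h4
        have h5 : (y:ℤ)^i ∣ (y:ℤ)^i * c' i := dvd_mul_right _ _
        simpa using dvd_sub h4 h5
      exact (hXY.symm.pow_left).dvd_of_dvd_mul_left h3
    have hall : ∀ m : ℕ, (y:ℤ)^(n-m) ∣ (x:ℤ)^(n-m) * s0 + A (n-m) := by
      intro m
      induction m with
      | zero => simpa using hsn
      | succ m ih =>
        rcases le_or_gt n m with h | h
        · rw [show n - (m+1) = n - m from by omega]
          exact ih
        · refine hstep (n - (m+1)) ?_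
          rw [show n - (m+1) + 1 = n - m from by omega]
          exact ih
    have hdvd_i : ∀ i, i ≤ n → (y:ℤ)^i ∣ (x:ℤ)^i * s0 + A i := by
      intro i hi
      have := hall (n - i)
      rwa [show n - (n - i) = i from by omega] at this
    obtain ⟨s, hsdef⟩ : ∃ s : ℕ → ℤ, ∀ i, s i = ((x:ℤ)^i * s0 + A i) / (y:ℤ)^i :=
      ⟨_, fun i => rfl⟩
    have hs : ∀ i, i ≤ n → (y:ℤ)^i * s i = (x:ℤ)^i * s0 + A i := by
      intro i hi
      rw [hsdef i]
      exact Int.mul_ediv_cancel' (hdvd_i i hi)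
    have hs0 : s 0 = s0 := by
      rw [hsdef 0]
      simp [hAdef 0]
    have hR1 : ∀ i, i < n → (y:ℤ) * s (i+1) = c' i + (x:ℤ) * s i := by
      intro i hi
      have hYne : ((y:ℤ)^i) ≠ 0 := pow_ne_zero _ (by exact_mod_cast hy.ne')
      refine mul_left_cancel₀ hYne ?_
      have e1 := hs (i+1) (by omega)
      have e2 := hs i (by omega)
      have e3 := hA i
      linear_combination e1 + e3 - (x:ℤ) * e2
    have hSumId : (y:ℤ)^(n+1) * (∑ i ∈ Finset.range (n+1), s i)
        = (N:ℤ) * ((y:ℤ) * s0 + ∑ j ∈ Finset.range n, c' j)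
          - ∑ j ∈ Finset.range n, c' j * ((hval n x y (j+1) : ℕ) : ℤ) := by
      have step1 : ∀ i ∈ Finset.range (n+1), (y:ℤ)^(n+1) * s i
          = (y:ℤ)^(n+1-i) * ((x:ℤ)^i * s0) + (y:ℤ)^(n+1-i) * A i := by
        intro i hi
        rw [Finset.mem_range] at hi
        rw [← mul_add, ← hs i (by omega), ← mul_assoc, ← pow_add,
          show n+1-i+i = n+1 from by omega]
      rw [Finset.mul_sum, Finset.sum_congr rfl step1, Finset.sum_add_distrib]
      have first : ∑ i ∈ Finset.range (n+1), (y:ℤ)^(n+1-i) * ((x:ℤ)^i * s0)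
          = (N:ℤ) * ((y:ℤ) * s0) := by
        have h1 : ∀ i ∈ Finset.range (n+1), (y:ℤ)^(n+1-i) * ((x:ℤ)^i * s0)
            = ((x:ℤ)^i * (y:ℤ)^(n-i)) * ((y:ℤ) * s0) := by
          intro i hi
          rw [Finset.mem_range] at hi
          rw [show n+1-i = (n-i)+1 from by omega, pow_succ]
          ring
        rw [Finset.sum_congr rfl h1, ← Finset.sum_mul, ← Fval_reflect n x y, ← hNdef]
      have second : ∑ i ∈ Finset.range (n+1), (y:ℤ)^(n+1-i) * A i
          = ∑ j ∈ Finset.range n, c' j * ((N:ℤ) - ((hval n x y (j+1) : ℕ) : ℤ)) := by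
        have expand : ∀ i ∈ Finset.range (n+1), (y:ℤ)^(n+1-i) * A i
            = ∑ j ∈ Finset.range i, (y:ℤ)^(n+1-i) * ((x:ℤ)^(i-1-j) * (y:ℤ)^j * c' j) := by
          intro i _
          rw [hAdef i, Finset.mul_sum]
        rw [Finset.sum_congr rfl expand,
          swapLemma (n+1) (fun i j => (y:ℤ)^(n+1-i) * ((x:ℤ)^(i-1-j) * (y:ℤ)^j * c' j)),
          Finset.sum_range_succ]
        simp only [Finset.Ico_self, Finset.sum_empty, add_zero]
        refine Finset.sum_congr rfl fun j hj => ?_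
        rw [Finset.mem_range] at hj
        rw [Finset.sum_Ico_eq_sum_range, show n+1-(j+1) = n-j from by omega]
        have inner : ∀ t ∈ Finset.range (n-j),
            (y:ℤ)^(n+1-(j+1+t)) * ((x:ℤ)^((j+1+t)-1-j) * (y:ℤ)^j * c' j)
              = ((x:ℤ)^t * (y:ℤ)^(n-t)) * c' j := by
          intro t ht
          rw [Finset.mem_range] at ht
          rw [show (j+1+t)-1-j = t from by omega, show n+1-(j+1+t) = n-j-t from by omega,
            show n-t = (n-j-t)+j from by omega, pow_add]
          ring
        rw [Finset.sum_congr rfl inner, ← Finset.sum_mul]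
        have split : ∑ t ∈ Finset.range (n-j), (x:ℤ)^t * (y:ℤ)^(n-t)
            = (N:ℤ) - ((hval n x y (j+1) : ℕ) : ℤ) := by
          have htot := Finset.sum_range_add_sum_Ico (fun t => (x:ℤ)^t * (y:ℤ)^(n-t))
            (show n-j ≤ n+1 from by omega)
          have hico : ∑ t ∈ Finset.Ico (n-j) (n+1), (x:ℤ)^t * (y:ℤ)^(n-t)
              = ((hval n x y (j+1) : ℕ) : ℤ) := by
            rw [Finset.sum_Ico_eq_sum_range, show n+1-(n-j) = j+1 from by omega]
            have hv : ((hval n x y (j+1) : ℕ) : ℤ)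
                = ∑ i ∈ Finset.range (j+1), (x:ℤ)^(n-i) * (y:ℤ)^i := by
              rw [hval]
              push_cast
              rfl
            rw [hv, ← Finset.sum_range_reflect (fun i => (x:ℤ)^(n-i) * (y:ℤ)^i) (j+1)]
            refine Finset.sum_congr rfl fun t ht => ?_
            rw [Finset.mem_range] at ht
            rw [show j+1-1-t = j-t from by omega, show n-(j-t) = n-j+t from by omega,
              show n-(n-j+t) = j-t from by omega]
          rw [hico, ← Fval_reflect n x y, ← hNdef] at htot
          linarith [htot]
        rw [split]
        ring
      rw [first, second]
      have hsum_comm : ∑ j ∈ Finset.range n, c' j * ((N:ℤ) - ((hval n x y (j+1) : ℕ) : ℤ))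
          = (N:ℤ) * (∑ j ∈ Finset.range n, c' j)
            - ∑ j ∈ Finset.range n, c' j * ((hval n x y (j+1) : ℕ) : ℤ) := by
        rw [Finset.mul_sum, ← Finset.sum_sub_distrib]
        refine Finset.sum_congr rfl fun j _ => ?_
        ring
      rw [hsum_comm]
      ring
    have hdvdS : (N:ℤ) ∣ ∑ i ∈ Finset.range (n+1), s i := by
      have h1 : (N:ℤ) ∣ (y:ℤ)^(n+1) * ∑ i ∈ Finset.range (n+1), s i := by
        rw [hSumId]
        exact dvd_sub (Dvd.intro _ rfl) hdvd
      exact ((hcop_yN.pow_left).symm).dvd_of_dvd_mul_left h1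
    obtain ⟨q, hq⟩ := hdvdS
    obtain ⟨t, htdef⟩ : ∃ t : ℕ → ℤ, ∀ i, t i = ∑ j ∈ Finset.range (i+1), s j :=
      ⟨_, fun i => rfl⟩
    have htsucc : ∀ j, t (j+1) = t j + s (j+1) := by
      intro j
      rw [htdef, htdef, Finset.sum_range_succ]
    have ht0 : t 0 = s 0 := by
      rw [htdef]
      simp
    have hceq : c = (∑ k : Fin n, t (k:ℕ) • vvec n x y k)
        + ((y:ℤ) * ∑ i ∈ Finset.range (n+1), s i) • Pi.single (⟨n-1, by omega⟩ : Fin n) (1:ℤ) := by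
      funext i
      rw [Pi.add_apply, rowEval n x y t i, Pi.smul_apply, Pi.single_apply, smul_eq_mul]
      by_cases h1 : (i:ℕ)+1 < n
      · have hne : ¬(i = (⟨n-1, by omega⟩ : Fin n)) := by
          intro hh
          have := congrArg Fin.val hh
          simp at this
          omega
        rw [if_pos h1, if_neg hne, mul_zero, add_zero]
        by_cases h2 : 1 ≤ (i:ℕ)
        · rw [if_pos h2]
          have e1 := htsucc (i:ℕ)
          have e2 : t (i:ℕ) = t ((i:ℕ)-1) + s (i:ℕ) := by
            conv_lhs => rw [show (i:ℕ) = ((i:ℕ)-1)+1 from by omega]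
            rw [htsucc, show ((i:ℕ)-1)+1 = (i:ℕ) from by omega]
          have e3 := hR1 (i:ℕ) i.isLt
          rw [← hc'eq i, e1, e2]
          linear_combination -e3
        · have hi0 : (i:ℕ) = 0 := by omega
          rw [if_neg h2, add_zero, ← hc'eq i, hi0]
          have e1 := htsucc 0
          have e3 := hR1 0 (by omega)
          rw [e1, ht0]
          linear_combination -e3
      · have hieq : (i:ℕ) = n-1 := by
          have := i.isLt
          omega
        have heq : i = (⟨n-1, by omega⟩ : Fin n) := Fin.ext (by simpa using hieq)
        rw [if_neg h1, if_pos heq, mul_one]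
        have hS : ∑ i ∈ Finset.range (n+1), s i = t (n-1) + s n := by
          rw [Finset.sum_range_succ, htdef, show (n-1)+1 = n from by omega]
        by_cases h2 : 1 ≤ (i:ℕ)
        · rw [if_pos h2, ← hc'eq i, hieq, hS]
          have e2 : t (n-1) = t (n-1-1) + s (n-1) := by
            conv_lhs => rw [show n-1 = (n-1-1)+1 from by omega]
            rw [htsucc, show (n-1-1)+1 = n-1 from by omega]
          have e3 := hR1 (n-1) (by omega)
          rw [show (n-1)+1 = n from by omega] at e3
          rw [e2]
          linear_combination -e3
        · have hi0 : (i:ℕ) = 0 := by omega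
          have hn1 : n = 1 := by omega
          rw [if_neg h2, ← hc'eq i, hi0, hS, hn1]
          have e3 := hR1 0 (by omega)
          rw [show (1:ℕ)-1 = 0 from rfl, ht0]
          linear_combination -e3
    rw [hceq]
    refine AddSubgroup.add_mem _ ?_ ?_
    · refine AddSubgroup.sum_mem _ fun k _ => ?_
      exact AddSubgroup.zsmul_mem _ (AddSubgroup.subset_closure (Set.mem_range_self k)) _
    · have hfe := FE n x y hn
      rw [← hNdef] at hfe
      have hco : ((y:ℤ) * ∑ i ∈ Finset.range (n+1), s i) • Pi.single (⟨n-1, by omega⟩ : Fin n) (1:ℤ)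
          = ((y:ℤ) * q) • ((N : ℤ) • (Pi.single (⟨n-1, by omega⟩ : Fin n) (1:ℤ) : Fin n → ℤ)) := by
        rw [smul_smul, hq, show ((y:ℤ) * q) * (N:ℤ) = (y:ℤ) * ((N:ℤ) * q) from by ring]
      rw [hco, ← hfe]
      refine AddSubgroup.zsmul_mem _ ?_ _
      refine AddSubgroup.sum_mem _ fun k _ => ?_
      exact AddSubgroup.zsmul_mem _ (AddSubgroup.subset_closure (Set.mem_range_self k)) _
  -- assemble
  refine ⟨AddMonoidHom.mk' f hf, ?_, ?_, ?_, ?_⟩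
  · intro k
    exact hone k
  · exact hsurj
  · intro cc
    constructor
    · exact hker2 cc
    · intro hmem
      have hle : AddSubgroup.closure (Set.range (vvec n x y)) ≤ (AddMonoidHom.mk' f hf).ker := by
        rw [AddSubgroup.closure_le]
        rintro v ⟨k, rfl⟩
        exact hker_fwd k
      exact hle hmem
  · have hkereq : (AddMonoidHom.mk' f hf).ker = AddSubgroup.closure (Set.range (vvec n x y)) := by
      ext cc
      rw [AddMonoidHom.mem_ker]
      constructor
      · exact hker2 cc
      · intro hmem
        have hle : AddSubgroup.closure (Set.range (vvec n x y)) ≤ (AddMonoidHom.mk' f hf).ker := by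
          rw [AddSubgroup.closure_le]
          rintro v ⟨k, rfl⟩
          exact hker_fwd k
        exact hle hmem
    exact ⟨(QuotientAddGroup.quotientAddEquivOfEq hkereq.symm).trans
      (QuotientAddGroup.quotientKerEquivOfSurjective _ hsurj)⟩
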